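/- arXiv:1807.01105 — 2 statements merged into one kernel-verified Lean document; each statement's English description precedes it below -/
import Mathlib

section
/- Let R > 0 and 0 < d < R, and set m = R - d, a = 2*Real.sqrt (R^2 - d^2), and r = Real.sqrt (2*R*(R + d)) - (R + d). Then a = 2*r + 2*m if and only if 16*d^2*(R + d) = (R - d)*(R + 3*d)^2. -/
theorem stmt_5 (R d m a r : ℝ) (hR : 0 < R) (hd : 0 < d) (hdR : d < R)
    (hm : m = R - d) (ha : a = 2 * Real.sqrt (R ^ 2 - d ^ 2))
    (hr : r = Real.sqrt (2 * R * (R + d)) - (R + d)) :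
    a = 2 * r + 2 * m ↔ 16 * d ^ 2 * (R + d) = (R - d) * (R + 3 * d) ^ 2 := by
  subst hm ha hr
  set s := Real.sqrt (R ^ 2 - d ^ 2) with hs
  set t := Real.sqrt (2 * R * (R + d)) with ht
  have hs2 : s ^ 2 = R ^ 2 - d ^ 2 := Real.sq_sqrt (by nlinarith)
  have ht2 : t ^ 2 = 2 * R * (R + d) := Real.sq_sqrt (by nlinarith)
  have hs0 : 0 ≤ s := Real.sqrt_nonneg _
  have ht0 : 0 ≤ t := Real.sqrt_nonneg _
  constructor
  · intro h
    have h1 : s + 2 * d = t := by linarith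
    have h2 : 4 * d * s = (R - d) * (R + 3 * d) := by nlinarith [h1, hs2, ht2]
    nlinarith [h2, hs2, sq_nonneg (R - d)]
  · intro h
    have hX : 0 < (R - d) * (R + 3 * d) := by nlinarith
    have h3 : 4 * d * s = (R - d) * (R + 3 * d) := by
      have hz : (4 * d * s - (R - d) * (R + 3 * d)) * (4 * d * s + (R - d) * (R + 3 * d)) = 0 := by
        nlinarith [hs2]
      rcases mul_eq_zero.mp hz with h' | h'
      · linarith
      · nlinarith [mul_nonneg (mul_nonneg (by linarith : (0:ℝ) ≤ 4 * d) hs0) (le_of_lt hX)]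
    have h4 : (s + 2 * d) ^ 2 = t ^ 2 := by nlinarith
    have h5 : s + 2 * d = t := by
      have hz : (s + 2 * d - t) * (s + 2 * d + t) = 0 := by nlinarith
      rcases mul_eq_zero.mp hz with h' | h' <;> linarith
    linarith
end

section
/- Let R > 0 and 0 < d < R with m = R - d, a = 2*Real.sqrt (R^2 - d^2), r = Real.sqrt (2*R*(R+d)) - (R+d), and suppose a = 2*r + 2*m. If R is rational, then d is irrational. -/
theorem stmt_9 (R d m a r : ℝ) (hR : 0 < R) (hd : 0 < d) (hdR : d < R)
    (hm : m = R - d) (ha : a = 2 * Real.sqrt (R ^ 2 - d ^ 2))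
    (hr : r = Real.sqrt (2 * R * (R + d)) - (R + d))
    (hrel : a = 2 * r + 2 * m) (hQ : ∃ q : ℚ, (q : ℝ) = R) :
    Irrational d := by
  obtain ⟨p, hp⟩ := hQ
  rintro ⟨q, hq⟩
  set s := Real.sqrt (R ^ 2 - d ^ 2) with hs
  set u := Real.sqrt (2 * R * (R + d)) with hu'
  have hs2 : s ^ 2 = R ^ 2 - d ^ 2 := Real.sq_sqrt (by nlinarith)
  have hu2 : u ^ 2 = 2 * R * (R + d) := Real.sq_sqrt (by nlinarith)
  have hus : u = s + 2 * d := by linarith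
  have key1 : 4 * d * s = R ^ 2 + 2 * R * d - 3 * d ^ 2 := by
    have : (s + 2 * d) ^ 2 = 2 * R * (R + d) := by rw [← hus]; exact hu2
    nlinarith [hs2]
  have key2 : 16 * d ^ 2 * (R ^ 2 - d ^ 2) = (R ^ 2 + 2 * R * d - 3 * d ^ 2) ^ 2 := by
    rw [← key1, ← hs2]; ring
  have hpoly : 25 * d ^ 4 - 12 * d ^ 3 * R - 18 * d ^ 2 * R ^ 2 + 4 * d * R ^ 3 + R ^ 4 = 0 := by
    linear_combination -key2
  have hp0 : (0:ℝ) < (p:ℝ) := by rw [hp]; exact hR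
  have hpQ : 0 < p := by exact_mod_cast hp0
  set t : ℚ := q / p with htdef
  have htR : (t : ℝ) = d / R := by rw [htdef]; push_cast; rw [hq, hp]
  have hR0 : R ≠ 0 := ne_of_gt hR
  have ht : 25 * t ^ 4 - 12 * t ^ 3 - 18 * t ^ 2 + 4 * t + 1 = 0 := by
    have : ((25 * t ^ 4 - 12 * t ^ 3 - 18 * t ^ 2 + 4 * t + 1 : ℚ) : ℝ) = 0 := by
      push_cast
      rw [htR]
      field_simp
      linear_combination hpoly
    exact_mod_cast this
  have ht0 : 0 < t := by
    have : (0:ℝ) < (t:ℝ) := by rw [htR]; positivity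
    exact_mod_cast this
  have ht1 : t < 1 := by
    have : (t:ℝ) < 1 := by rw [htR]; exact (div_lt_one hR).mpr hdR
    exact_mod_cast this
  obtain ⟨n, hn⟩ : ∃ n : ℤ, n = t.num := ⟨_, rfl⟩
  obtain ⟨k, hk⟩ : ∃ k : ℤ, k = (t.den : ℤ) := ⟨_, rfl⟩
  have hk0 : 0 < k := by rw [hk]; exact_mod_cast t.pos
  have htnk : (t : ℚ) = (n : ℚ) / (k : ℚ) := by
    rw [hn, hk]; exact_mod_cast (Rat.num_div_den t).symm
  have hkQ : (k : ℚ) ≠ 0 := by exact_mod_cast hk0.ne'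
  have hnt : (n : ℚ) = t * k := by rw [htnk]; field_simp
  have hQint : (25 * (n:ℚ) ^ 4 - 12 * (n:ℚ) ^ 3 * k - 18 * (n:ℚ) ^ 2 * k ^ 2
      + 4 * (n:ℚ) * k ^ 3 + k ^ 4) = 0 := by
    rw [hnt]; linear_combination (k:ℚ) ^ 4 * ht
  have hint : 25 * n ^ 4 - 12 * n ^ 3 * k - 18 * n ^ 2 * k ^ 2 + 4 * n * k ^ 3 + k ^ 4 = 0 := by
    exact_mod_cast hQint
  have hcop : IsCoprime n k := by
    rw [Int.isCoprime_iff_gcd_eq_one, hn, hk]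
    exact_mod_cast t.reduced
  have hn0 : 0 < n := by rw [hn]; exact Rat.num_pos.mpr ht0
  have hndvd : n ∣ k ^ 4 :=
    ⟨-(25 * n ^ 3 - 12 * n ^ 2 * k - 18 * n * k ^ 2 + 4 * k ^ 3), by linarith [hint]⟩
  have hn1 : n = 1 := by
    have := ((hcop.pow_right (n := 4)).isUnit_of_dvd' dvd_rfl hndvd)
    rcases Int.isUnit_iff.mp this with h | h <;> omega
  have hkdvd : k ∣ 25 := by
    have h25 : k ∣ 25 * n ^ 4 :=
      ⟨12 * n ^ 3 + 18 * n ^ 2 * k - 4 * n * k ^ 2 - k ^ 3, by linarith [hint]⟩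
    exact (hcop.symm.pow_right (n := 4)).dvd_of_dvd_mul_right h25
  have hk1 : 1 < k := by
    have hkQ0 : (0:ℚ) < k := by exact_mod_cast hk0
    have h2 : (n:ℚ) < (k:ℚ) := by rw [hnt]; nlinarith
    have h3 : n < k := by exact_mod_cast h2
    omega
  have hk25 : k ≤ 25 := Int.le_of_dvd (by norm_num) hkdvd
  have heq : 25 - 12 * k - 18 * k ^ 2 + 4 * k ^ 3 + k ^ 4 = 0 := by
    rw [hn1] at hint; linarith
  interval_cases k <;> norm_num at heq
end
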